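/- Let I ⊆ S_safe × A be partial and F = (S_safe × A) \ I. Given a policy π, let f : (S ∪ {s_†}) × A → ℝ be any nonnegative function vanishing on I such that π_f(a|s) := π(a|s)·1{(s,a) ∈ F} + f(s,a) is a policy (i.e., ∑_a π_f(a|s) = 1 for every state s). Then: (i) d̃^{π_f}(s,a) ≥ d̃^π(s,a) for every (s,a) ∈ F; (ii) d̃^{π_f}(s,a) = 0 for every (s,a) ∈ I; and (iii) if R̃ ≤ 0, then Ṽ^{π_f}(d_0) ≥ Ṽ^π(d_0). -/

import Mathlib

open scoped BigOperators Classical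

noncomputable section

namespace SafeRL

variable {S A : Type*} [Fintype S] [Fintype A] [Nonempty A]

/-- `d` is a probability distribution on the finite type `S`. -/
def IsDist (d : S → ℝ) : Prop := (∀ s, 0 ≤ d s) ∧ ∑ s, d s = 1

/-- `P` is a transition kernel. -/
def IsKernel (P : S → A → S → ℝ) : Prop := ∀ s a, IsDist (P s a)

/-- `π` is a (Markov stationary stochastic) policy. -/
def IsPolicy (π : S → A → ℝ) : Prop := ∀ s, (∀ a, 0 ≤ π s a) ∧ ∑ a, π s a = 1

/-- Point mass at `s`. -/
def pureDist (s : S) : S → ℝ := fun s' => if s' = s then 1 else 0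

/-- One-step state-distribution update under policy `π`. -/
def step (P : S → A → S → ℝ) (π : S → A → ℝ) (d : S → ℝ) : S → ℝ :=
  fun s' => ∑ s, ∑ a, d s * π s a * P s a s'

/-- State distribution at time `t` when running `π` from `d0`. -/
def distAt (P : S → A → S → ℝ) (π : S → A → ℝ) (d0 : S → ℝ) (t : ℕ) : S → ℝ :=
  (step P π)^[t] d0

/-- Expected discounted return `V^π(d0)` of policy `π` from initial distribution `d0`. -/
def value (P : S → A → S → ℝ) (π : S → A → ℝ) (r : S → A → ℝ) (γ : ℝ) (d0 : S → ℝ) : ℝ :=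
  ∑' t : ℕ, γ ^ t * ∑ s, ∑ a, distAt P π d0 t s * π s a * r s a

/-- State value function `V^π(s)`. -/
def vf (P : S → A → S → ℝ) (π : S → A → ℝ) (r : S → A → ℝ) (γ : ℝ) (s : S) : ℝ :=
  value P π r γ (pureDist s)

/-- State-action value function `Q^π(s,a)`. -/
def qf (P : S → A → S → ℝ) (π : S → A → ℝ) (r : S → A → ℝ) (γ : ℝ) (s : S) (a : A) : ℝ :=
  r s a + γ * ∑ s', P s a s' * vf P π r γ s'

/-- The cost function `c(s,a) = 1{s = s_▷}` of the cost-based MDP. -/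
def cost (sbad : S) : S → A → ℝ := fun s _ => if s = sbad then 1 else 0

/-- Discounted state distribution `d^π(s)`. -/
def dsd (P : S → A → S → ℝ) (π : S → A → ℝ) (γ : ℝ) (d0 : S → ℝ) (s : S) : ℝ :=
  (1 - γ) * ∑' t : ℕ, γ ^ t * distAt P π d0 t s

/-- Discounted state-action distribution `d^π(s,a)`. -/
def dsa (P : S → A → S → ℝ) (π : S → A → ℝ) (γ : ℝ) (d0 : S → ℝ) (s : S) (a : A) : ℝ :=
  (1 - γ) * ∑' t : ℕ, γ ^ t * distAt P π d0 t s * π s a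

/-- Probability of the `h`-step trajectory prefix `f` when running `π` from `d`. -/
def prefProb (P : S → A → S → ℝ) (π : S → A → ℝ) :
    (S → ℝ) → (h : ℕ) → (Fin h → S × A) → ℝ
  | _, 0, _ => 1
  | d, h + 1, f =>
      d (f 0).1 * π (f 0).1 (f 0).2 *
        prefProb P π (P (f 0).1 (f 0).2) h (fun i => f i.succ)

/-- Probability that the `h`-step trajectory prefix generated by `π` from `d0` satisfies `E`. -/
def eventProb (P : S → A → S → ℝ) (π : S → A → ℝ) (d0 : S → ℝ) (h : ℕ)
    (E : (Fin h → S × A) → Prop) : ℝ :=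
  ∑ f : Fin h → S × A, if E f then prefProb P π d0 h f else 0

/-- `Q̄(s,μ) = E_{a ∼ μ(·|s)} Q̄(s,a)`. -/
def Qpol (Qb : S → A → ℝ) (μ : S → A → ℝ) (s : S) : ℝ := ∑ a, μ s a * Qb s a

/-- Advantage-like function `Ā(s,a) = Q̄(s,a) − Q̄(s,μ)`. -/
def Abar (Qb : S → A → ℝ) (μ : S → A → ℝ) (s : S) (a : A) : ℝ := Qb s a - Qpol Qb μ s

/-- The intervention set `I = {(s,a) ∈ S_safe × A : Ā(s,a) > η}`. -/
def intSet (Qb : S → A → ℝ) (μ : S → A → ℝ) (η : ℝ) (sbad sabs : S) : Set (S × A) :=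
  {p | p.1 ≠ sbad ∧ p.1 ≠ sabs ∧ η < Abar Qb μ p.1 p.2}

/-- The shielded policy `π' = G(π)`. -/
def shield (π μ : S → A → ℝ) (I : Set (S × A)) (sbad sabs : S) : S → A → ℝ :=
  fun s a =>
    if s = sbad ∨ s = sabs then π s a
    else (if (s, a) ∈ I then 0 else π s a)
      + μ s a * (1 - ∑ a', if (s, a') ∈ I then π s a' else 0)

/-- `σ`-admissibility of the intervention rule `(Q̄, μ, η)` (the condition does not
involve `η`): on safe states, `Q̄ ∈ [0,γ]` and
`c(s,a) + γ E_{s'∼P(·|s,a)}[Q̄(s',μ)] ≤ Q̄(s,a) + σ`. -/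
def SigmaAdmissible (P : S → A → S → ℝ) (Qb : S → A → ℝ) (μ : S → A → ℝ)
    (γ σ : ℝ) (sbad sabs : S) : Prop :=
  ∀ s, s ≠ sbad → s ≠ sabs → ∀ a : A,
    (0 ≤ Qb s a ∧ Qb s a ≤ γ) ∧
    cost sbad s a + γ * ∑ s', P s a s' * Qpol Qb μ s' ≤ Qb s a + σ

/-- Transition kernel of the absorbing MDP `M̃`; `none` plays the role of `s_†`. -/
def Ptil (P : S → A → S → ℝ) (I : Set (S × A)) : Option S → A → Option S → ℝ :=
  fun s? a s'? =>
    match s? with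
    | none => if s'? = none then 1 else 0
    | some s =>
        if (s, a) ∈ I then (if s'? = none then 1 else 0)
        else
          match s'? with
          | none => 0
          | some s' => P s a s'

/-- Reward of the absorbing MDP `M̃` with penalty `Rt` on the intervention set. -/
def rtil (r : S → A → ℝ) (I : Set (S × A)) (Rt : ℝ) : Option S → A → ℝ :=
  fun s? a =>
    match s? with
    | none => 0
    | some s => if (s, a) ∈ I then Rt else r s a

/-- Extension of a policy on `S` to `S ∪ {s_†}`, uniform at `s_†`. -/
def extPol (π : S → A → ℝ) : Option S → A → ℝ :=
  fun s? a =>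
    match s? with
    | none => (Fintype.card A : ℝ)⁻¹
    | some s => π s a

/-- Extension of an initial distribution on `S` to `S ∪ {s_†}`. -/
def extDist (d0 : S → ℝ) : Option S → ℝ :=
  fun s? => match s? with | none => 0 | some s => d0 s

/-- `P_G(π)`: discounted probability that a trajectory of `π` in `M` visits `I`. -/
def PG (P : S → A → S → ℝ) (π : S → A → ℝ) (d0 : S → ℝ) (γ : ℝ)
    (I : Set (S × A)) : ℝ :=
  (1 - γ) * ∑' h : ℕ, γ ^ h * eventProb P π d0 h (fun f => ∃ i, f i ∈ I)

/-- The deterministic policy associated to a map `g : S → A`. -/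
def detPol (g : S → A) : S → A → ℝ := fun s a => if a = g s then 1 else 0

/-- Bellman optimality operator `T̄` of the cost-based MDP. -/
def Tbar (P : S → A → S → ℝ) (sbad : S) (γ : ℝ) (Q : S → A → ℝ) : S → A → ℝ :=
  fun s a =>
    cost sbad s a +
      γ * ∑ s', P s a s' * Finset.univ.inf' Finset.univ_nonempty (fun a' => Q s' a')


set_option linter.unusedSectionVars false in
lemma aux_step_nonneg {P : S → A → S → ℝ} {π : S → A → ℝ} {d : S → ℝ}
    (hP : ∀ s a s', 0 ≤ P s a s') (hπ : ∀ s a, 0 ≤ π s a) (hd : ∀ s, 0 ≤ d s) :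
    ∀ s, 0 ≤ step P π d s := by
  intro s'
  refine Finset.sum_nonneg fun s _ => Finset.sum_nonneg fun a _ => ?_
  exact mul_nonneg (mul_nonneg (hd s) (hπ s a)) (hP s a s')

set_option linter.unusedSectionVars false in
lemma aux_distAt_nonneg {P : S → A → S → ℝ} {π : S → A → ℝ} {d0 : S → ℝ}
    (hP : ∀ s a s', 0 ≤ P s a s') (hπ : ∀ s a, 0 ≤ π s a) (hd : ∀ s, 0 ≤ d0 s) :
    ∀ t s, 0 ≤ distAt P π d0 t s := by
  intro t
  induction t with
  | zero => exact hd
  | succ t ih =>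
    intro s
    rw [distAt, Function.iterate_succ_apply']
    exact aux_step_nonneg hP hπ ih s

set_option linter.unusedSectionVars false in
lemma aux_step_sum {P : S → A → S → ℝ} {π : S → A → ℝ} {d : S → ℝ}
    (hP : ∀ s a, ∑ s', P s a s' = 1) (hπ : ∀ s, ∑ a, π s a = 1) :
    ∑ s', step P π d s' = ∑ s, d s := by
  unfold step
  rw [Finset.sum_comm]
  refine Finset.sum_congr rfl fun s _ => ?_
  rw [Finset.sum_comm]
  calc ∑ a, ∑ s', d s * π s a * P s a s'
      = ∑ a, d s * π s a := by
        refine Finset.sum_congr rfl fun a _ => ?_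
        rw [← Finset.mul_sum, hP s a, mul_one]
    _ = d s := by rw [← Finset.mul_sum, hπ s, mul_one]

set_option linter.unusedSectionVars false in
lemma aux_distAt_sum {P : S → A → S → ℝ} {π : S → A → ℝ} {d0 : S → ℝ}
    (hP : ∀ s a, ∑ s', P s a s' = 1) (hπ : ∀ s, ∑ a, π s a = 1) :
    ∀ t, ∑ s, distAt P π d0 t s = ∑ s, d0 s := by
  intro t
  induction t with
  | zero => rfl
  | succ t ih =>
    have h : ∑ s, distAt P π d0 (t+1) s = ∑ s, step P π (distAt P π d0 t) s := by
      refine Finset.sum_congr rfl fun s _ => ?_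
      rw [distAt, Function.iterate_succ_apply']; rfl
    rw [h, aux_step_sum hP hπ, ih]

set_option linter.unusedSectionVars false in
lemma aux_distAt_le_one {P : S → A → S → ℝ} {π : S → A → ℝ} {d0 : S → ℝ}
    (hP : ∀ s a s', 0 ≤ P s a s') (hPs : ∀ s a, ∑ s', P s a s' = 1)
    (hπ : ∀ s a, 0 ≤ π s a) (hπs : ∀ s, ∑ a, π s a = 1)
    (hd : ∀ s, 0 ≤ d0 s) (hds : ∑ s, d0 s = 1) :
    ∀ t s, distAt P π d0 t s ≤ 1 := by
  intro t s
  have h1 : distAt P π d0 t s ≤ ∑ s', distAt P π d0 t s' :=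
    Finset.single_le_sum (fun s' _ => aux_distAt_nonneg hP hπ hd t s') (Finset.mem_univ s)
  rw [aux_distAt_sum hPs hπs, hds] at h1
  exact h1

set_option linter.unusedSectionVars false in
lemma aux_Ptil_nonneg {P : S → A → S → ℝ} {I : Set (S × A)} (hP : IsKernel P) :
    ∀ s? a s'?, 0 ≤ Ptil P I s? a s'? := by
  intro s? a s'?
  cases s? with
  | none => simp only [Ptil]; split_ifs <;> norm_num
  | some s =>
    cases s'? with
    | none => simp only [Ptil]; split_ifs <;> norm_num
    | some s' =>
      by_cases h : (s, a) ∈ I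
      · simp [Ptil, h]
      · simpa [Ptil, h] using (hP s a).1 s'

set_option linter.unusedSectionVars false in
lemma aux_Ptil_sum {P : S → A → S → ℝ} {I : Set (S × A)} (hP : IsKernel P) :
    ∀ s? a, ∑ s'?, Ptil P I s? a s'? = 1 := by
  intro s? a
  cases s? with
  | none =>
    rw [Fintype.sum_option]
    simp [Ptil]
  | some s =>
    by_cases h : (s, a) ∈ I
    · rw [Fintype.sum_option]
      simp [Ptil, h]
    · rw [Fintype.sum_option]
      simp [Ptil, h, (hP s a).2]

set_option linter.unusedSectionVars false in
lemma aux_extPol_nonneg {π : S → A → ℝ} (hπ : IsPolicy π) :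
    ∀ s? a, 0 ≤ extPol π s? a := by
  intro s? a
  cases s? with
  | none => simp only [extPol]; positivity
  | some s => exact (hπ s).1 a

set_option linter.unusedSectionVars false in
lemma aux_extPol_sum {π : S → A → ℝ} (hπ : IsPolicy π) :
    ∀ s?, ∑ a, extPol π s? a = 1 := by
  intro s?
  cases s? with
  | none =>
    simp only [extPol, Finset.sum_const, Finset.card_univ, nsmul_eq_mul]
    rw [mul_inv_cancel₀]
    exact_mod_cast (Fintype.card_ne_zero : Fintype.card A ≠ 0)
  | some s => exact (hπ s).2

/-- properties of the non-intervened policy `π_f`: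
(i) `d̃^{π_f} ≥ d̃^π` on `F`; (ii) `d̃^{π_f} = 0` on `I`; (iii) if `R̃ ≤ 0` then
`Ṽ^{π_f}(d₀) ≥ Ṽ^π(d₀)`. -/
theorem stmt_14
    (P : S → A → S → ℝ) (r : S → A → ℝ) (γ : ℝ) (sbad sabs : S) (d0 : S → ℝ)
    (π : S → A → ℝ) (I : Set (S × A)) (Rt : ℝ)
    (f πf : Option S → A → ℝ)
    (hP : IsKernel P) (hγ0 : 0 ≤ γ) (hγ1 : γ < 1)
    (hr : ∀ s a, 0 ≤ r s a ∧ r s a ≤ 1)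
    (hne : sbad ≠ sabs)
    (hPbad : ∀ a, P sbad a = pureDist sabs)
    (hPabs : ∀ a, P sabs a = pureDist sabs)
    (hrbad : ∀ a : A, r sbad a = 0) (hrabs : ∀ a : A, r sabs a = 0)
    (hd0 : IsDist d0) (hπ : IsPolicy π)
    (hI : ∀ p ∈ I, p.1 ≠ sbad ∧ p.1 ≠ sabs)
    (hpartial : ∀ p ∈ I, ∃ a' : A, (p.1, a') ∉ I)
    (hf0 : ∀ s? (a : A), 0 ≤ f s? a)
    (hfI : ∀ s a, (s, a) ∈ I → f (some s) a = 0)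
    (hπf : ∀ s? (a : A), πf s? a =
      (match s? with
        | none => (0 : ℝ)
        | some s => if s ≠ sbad ∧ s ≠ sabs ∧ (s, a) ∉ I then π s a else 0)
      + f s? a)
    (hpol : ∀ s?, ∑ a, πf s? a = 1) :
    (∀ s a, s ≠ sbad → s ≠ sabs → (s, a) ∉ I →
        dsa (Ptil P I) (extPol π) γ (extDist d0) (some s) a
          ≤ dsa (Ptil P I) πf γ (extDist d0) (some s) a)
    ∧ (∀ s a, (s, a) ∈ I → dsa (Ptil P I) πf γ (extDist d0) (some s) a = 0)
    ∧ (Rt ≤ 0 →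
        value (Ptil P I) (extPol π) (rtil r I Rt) γ (extDist d0)
          ≤ value (Ptil P I) πf (rtil r I Rt) γ (extDist d0)) := by
    classical
  have hPn : ∀ s a s', 0 ≤ P s a s' := fun s a s' => (hP s a).1 s'
  have hPtn : ∀ s? a s'?, 0 ≤ Ptil P I s? a s'? := aux_Ptil_nonneg hP
  have hPts : ∀ s? a, ∑ s'?, Ptil P I s? a s'? = 1 := aux_Ptil_sum hP
  have hπen : ∀ s? a, 0 ≤ extPol π s? a := aux_extPol_nonneg hπ
  have hπes : ∀ s?, ∑ a, extPol π s? a = 1 := aux_extPol_sum hπ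
  have hπfn : ∀ s? a, 0 ≤ πf s? a := by
    intro s? a
    rw [hπf]
    refine add_nonneg ?_ (hf0 s? a)
    cases s? with
    | none => exact le_refl 0
    | some s =>
      show (0:ℝ) ≤ if s ≠ sbad ∧ s ≠ sabs ∧ (s, a) ∉ I then π s a else 0
      split_ifs with h
      · exact (hπ s).1 a
      · exact le_refl 0
  have hπfI : ∀ s a, (s, a) ∈ I → πf (some s) a = 0 := by
    intro s a h
    rw [hπf]
    show (if s ≠ sbad ∧ s ≠ sabs ∧ (s, a) ∉ I then π s a else 0) + f (some s) a = 0
    rw [if_neg (fun hc => hc.2.2 h), hfI s a h, add_zero]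
  have hπfge : ∀ s a, s ≠ sbad → s ≠ sabs → (s, a) ∉ I → π s a ≤ πf (some s) a := by
    intro s a h1 h2 h3
    rw [hπf]
    show π s a ≤ (if s ≠ sbad ∧ s ≠ sabs ∧ (s, a) ∉ I then π s a else 0) + f (some s) a
    rw [if_pos ⟨h1, h2, h3⟩]
    exact le_add_of_nonneg_right (hf0 _ _)
  have hed0n : ∀ s?, 0 ≤ extDist d0 s? := by
    intro s?; cases s? with
    | none => exact le_refl 0
    | some s => exact hd0.1 s
  have hed0s : ∑ s?, extDist d0 s? = 1 := by
    rw [Fintype.sum_option]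
    simpa [extDist] using hd0.2
  have hDe_n : ∀ t s?, 0 ≤ distAt (Ptil P I) (extPol π) (extDist d0) t s? :=
    aux_distAt_nonneg hPtn hπen hed0n
  have hDf_n : ∀ t s?, 0 ≤ distAt (Ptil P I) πf (extDist d0) t s? :=
    aux_distAt_nonneg hPtn hπfn hed0n
  have hDe_le1 : ∀ t s?, distAt (Ptil P I) (extPol π) (extDist d0) t s? ≤ 1 :=
    aux_distAt_le_one hPtn hPts hπen hπes hed0n hed0s
  have hDf_le1 : ∀ t s?, distAt (Ptil P I) πf (extDist d0) t s? ≤ 1 :=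
    aux_distAt_le_one hPtn hPts hπfn hpol hed0n hed0s
  have hpure_n : ∀ s' : S, 0 ≤ pureDist sabs s' := by
    intro s'; unfold pureDist; split_ifs <;> norm_num
  -- key monotonicity of the state distributions on `S`
  have key : ∀ t s, distAt (Ptil P I) (extPol π) (extDist d0) t (some s)
      ≤ distAt (Ptil P I) πf (extDist d0) t (some s) := by
    intro t
    induction t with
    | zero => intro s; exact le_refl _
    | succ t ih =>
      intro s'
      rw [distAt, distAt, Function.iterate_succ_apply', Function.iterate_succ_apply']
      show step (Ptil P I) (extPol π) (distAt (Ptil P I) (extPol π) (extDist d0) t) (some s')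
          ≤ step (Ptil P I) πf (distAt (Ptil P I) πf (extDist d0) t) (some s')
      unfold step
      rw [Fintype.sum_option, Fintype.sum_option]
      have hnone : ∀ (pol : Option S → A → ℝ) (dd : Option S → ℝ),
          ∑ a, dd none * pol none a * Ptil P I none a (some s') = 0 := by
        intro pol dd
        refine Finset.sum_eq_zero fun a _ => ?_
        have h0 : Ptil P I none a (some s') = 0 := by simp [Ptil]
        rw [h0, mul_zero]
      rw [hnone, hnone, zero_add, zero_add]
      refine Finset.sum_le_sum fun s _ => ?_
      by_cases hb : s = sbad ∨ s = sabs
      · have hPc : ∀ a, Ptil P I (some s) a (some s') = pureDist sabs s' := by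
          intro a
          have hnI : (s, a) ∉ I := by
            intro h
            rcases hI _ h with ⟨h1, h2⟩
            rcases hb with hb | hb
            · exact h1 hb
            · exact h2 hb
          have hEq : Ptil P I (some s) a (some s') = P s a s' := by simp [Ptil, hnI]
          rw [hEq]
          rcases hb with hb | hb <;> subst hb
          · rw [hPbad a]
          · rw [hPabs a]
        have hrow : ∀ (dd : ℝ) (pol : A → ℝ), ∑ a, pol a = 1 →
            ∑ a, dd * pol a * pureDist sabs s' = dd * pureDist sabs s' := by
          intro dd pol hsum
          rw [← Finset.sum_mul, ← Finset.mul_sum, hsum, mul_one]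
        have e1 : ∑ a, distAt (Ptil P I) (extPol π) (extDist d0) t (some s) * extPol π (some s) a *
              Ptil P I (some s) a (some s')
            = distAt (Ptil P I) (extPol π) (extDist d0) t (some s) * pureDist sabs s' := by
          rw [Finset.sum_congr rfl (fun a _ => by rw [hPc a])]
          exact hrow _ _ (hπes (some s))
        have e2 : ∑ a, distAt (Ptil P I) πf (extDist d0) t (some s) * πf (some s) a *
              Ptil P I (some s) a (some s')
            = distAt (Ptil P I) πf (extDist d0) t (some s) * pureDist sabs s' := by
          rw [Finset.sum_congr rfl (fun a _ => by rw [hPc a])]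
          exact hrow _ _ (hpol (some s))
        rw [e1, e2]
        exact mul_le_mul_of_nonneg_right (ih s) (hpure_n s')
      · push_neg at hb
        refine Finset.sum_le_sum fun a _ => ?_
        by_cases hIa : (s, a) ∈ I
        · have h0 : Ptil P I (some s) a (some s') = 0 := by simp [Ptil, hIa]
          rw [h0, mul_zero, mul_zero]
        · have hEq : Ptil P I (some s) a (some s') = P s a s' := by simp [Ptil, hIa]
          rw [hEq]
          refine mul_le_mul_of_nonneg_right ?_ (hPn s a s')
          exact mul_le_mul (ih s) (hπfge s a hb.1 hb.2 hIa) (hπen (some s) a) (hDf_n t (some s))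
  have hpol_le_one : ∀ (pol : Option S → A → ℝ), (∀ s? a, 0 ≤ pol s? a) →
      (∀ s?, ∑ a, pol s? a = 1) → ∀ s? a, pol s? a ≤ 1 := by
    intro pol hn hs s? a
    calc pol s? a ≤ ∑ a', pol s? a' :=
          Finset.single_le_sum (fun a' _ => hn s? a') (Finset.mem_univ a)
      _ = 1 := hs s?
  have hSble : ∀ (pol : Option S → A → ℝ), (∀ s? a, 0 ≤ pol s? a) →
      (∀ s?, ∑ a, pol s? a = 1) → ∀ s a,
      Summable (fun t => γ ^ t * distAt (Ptil P I) pol (extDist d0) t (some s) * pol (some s) a) := by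
    intro pol hn hs s a
    refine Summable.of_nonneg_of_le (fun t => ?_) (fun t => ?_)
      (summable_geometric_of_lt_one hγ0 hγ1)
    · exact mul_nonneg (mul_nonneg (pow_nonneg hγ0 t)
        (aux_distAt_nonneg hPtn hn hed0n t (some s))) (hn (some s) a)
    · calc γ ^ t * distAt (Ptil P I) pol (extDist d0) t (some s) * pol (some s) a
          ≤ γ ^ t * 1 * 1 := by
            refine mul_le_mul ?_ (hpol_le_one pol hn hs (some s) a) (hn (some s) a) ?_
            · exact mul_le_mul_of_nonneg_left
                (aux_distAt_le_one hPtn hPts hn hs hed0n hed0s t (some s)) (pow_nonneg hγ0 t)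
            · positivity
        _ = γ ^ t := by ring
  refine ⟨?_, ?_, ?_⟩
  · -- (i)
    intro s a h1 h2 h3
    unfold dsa
    refine mul_le_mul_of_nonneg_left ?_ (by linarith)
    refine Summable.tsum_le_tsum (fun t => ?_) (hSble (extPol π) hπen hπes s a) (hSble πf hπfn hpol s a)
    refine mul_le_mul ?_ ?_ (hπen (some s) a) ?_
    · exact mul_le_mul_of_nonneg_left (key t s) (pow_nonneg hγ0 t)
    · exact hπfge s a h1 h2 h3
    · exact mul_nonneg (pow_nonneg hγ0 t) (hDf_n t (some s))
  · -- (ii)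
    intro s a h
    simp only [dsa, hπfI s a h, mul_zero, tsum_zero]
  · -- (iii)
    intro hRt
    unfold value
    have hrtb : ∀ s? a, |rtil r I Rt s? a| ≤ 1 + |Rt| := by
      intro s? a
      cases s? with
      | none => simp only [rtil, abs_zero]; positivity
      | some s =>
        by_cases hIa : (s, a) ∈ I
        · simp only [rtil, if_pos hIa]
          linarith [abs_nonneg Rt]
        · simp only [rtil, if_neg hIa]
          rw [abs_of_nonneg (hr s a).1]
          linarith [(hr s a).2, abs_nonneg Rt]
    have hRbound : ∀ (pol : Option S → A → ℝ), (∀ s? a, 0 ≤ pol s? a) →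
        (∀ s?, ∑ a, pol s? a = 1) → ∀ t : ℕ,
        |∑ s?, ∑ a, distAt (Ptil P I) pol (extDist d0) t s? * pol s? a * rtil r I Rt s? a|
          ≤ 1 + |Rt| := by
      intro pol hn hs t
      have hmass : ∑ s?, ∑ a, distAt (Ptil P I) pol (extDist d0) t s? * pol s? a = 1 := by
        have hinner : ∀ s?, ∑ a, distAt (Ptil P I) pol (extDist d0) t s? * pol s? a
            = distAt (Ptil P I) pol (extDist d0) t s? := by
          intro s?; rw [← Finset.mul_sum, hs s?, mul_one]
        rw [Finset.sum_congr rfl (fun s? _ => hinner s?), aux_distAt_sum hPts hs, hed0s]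
      calc |∑ s?, ∑ a, distAt (Ptil P I) pol (extDist d0) t s? * pol s? a * rtil r I Rt s? a|
          ≤ ∑ s?, |∑ a, distAt (Ptil P I) pol (extDist d0) t s? * pol s? a * rtil r I Rt s? a| :=
            Finset.abs_sum_le_sum_abs _ _
        _ ≤ ∑ s?, ∑ a, |distAt (Ptil P I) pol (extDist d0) t s? * pol s? a * rtil r I Rt s? a| :=
            Finset.sum_le_sum fun s? _ => Finset.abs_sum_le_sum_abs _ _
        _ ≤ ∑ s?, ∑ a, distAt (Ptil P I) pol (extDist d0) t s? * pol s? a * (1 + |Rt|) := by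
            refine Finset.sum_le_sum fun s? _ => Finset.sum_le_sum fun a _ => ?_
            rw [abs_mul, abs_mul, abs_of_nonneg (aux_distAt_nonneg hPtn hn hed0n t s?),
              abs_of_nonneg (hn s? a)]
            exact mul_le_mul_of_nonneg_left (hrtb s? a)
              (mul_nonneg (aux_distAt_nonneg hPtn hn hed0n t s?) (hn s? a))
        _ = 1 + |Rt| := by
            simp only [← Finset.sum_mul]
            rw [hmass, one_mul]
    have hSv : ∀ (pol : Option S → A → ℝ), (∀ s? a, 0 ≤ pol s? a) →
        (∀ s?, ∑ a, pol s? a = 1) →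
        Summable (fun t : ℕ => γ ^ t *
          ∑ s?, ∑ a, distAt (Ptil P I) pol (extDist d0) t s? * pol s? a * rtil r I Rt s? a) := by
      intro pol hn hs
      refine Summable.of_norm_bounded (g := fun t => (1 + |Rt|) * γ ^ t)
        ((summable_geometric_of_lt_one hγ0 hγ1).mul_left _) (fun t => ?_)
      rw [Real.norm_eq_abs, abs_mul, abs_pow, abs_of_nonneg hγ0, mul_comm]
      exact mul_le_mul_of_nonneg_right (hRbound pol hn hs t) (pow_nonneg hγ0 t)
    refine Summable.tsum_le_tsum (fun t => ?_) (hSv (extPol π) hπen hπes) (hSv πf hπfn hpol)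
    refine mul_le_mul_of_nonneg_left ?_ (pow_nonneg hγ0 t)
    refine Finset.sum_le_sum fun s? _ => ?_
    cases s? with
    | none => simp [rtil]
    | some s =>
      refine Finset.sum_le_sum fun a _ => ?_
      by_cases hIa : (s, a) ∈ I
      · rw [hπfI s a hIa, mul_zero, zero_mul]
        have hrtEq : rtil r I Rt (some s) a = Rt := by simp [rtil, hIa]
        rw [hrtEq]
        calc distAt (Ptil P I) (extPol π) (extDist d0) t (some s) * extPol π (some s) a * Rt
            ≤ distAt (Ptil P I) (extPol π) (extDist d0) t (some s) * extPol π (some s) a * 0 :=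
              mul_le_mul_of_nonneg_left hRt
                (mul_nonneg (hDe_n t (some s)) (hπen (some s) a))
          _ = 0 := mul_zero _
      · have hrtEq : rtil r I Rt (some s) a = r s a := by simp [rtil, hIa]
        rw [hrtEq]
        by_cases hb : s = sbad ∨ s = sabs
        · rcases hb with hb | hb <;> subst hb <;> simp [hrbad, hrabs]
        · push_neg at hb
          refine mul_le_mul_of_nonneg_right ?_ (hr s a).1
          exact mul_le_mul (key t s) (hπfge s a hb.1 hb.2 hIa) (hπen (some s) a)
            (hDf_n t (some s))

end SafeRL
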